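/- van Benthem-style characterization of WAML^n: a first-order L¹_n-formula α(x) is invariant under wa^n-bisimulation (over all n-models) if and only if there is a WAML formula φ such that α(x) and ST_x(φ) are equivalent over all n-models (i.e., for every n-model M and world w, M ⊨ α[w] iff M ⊨ ST_x(φ)[w]). -/

import Mathlib

namespace WAML

/-- The language of WAML: atoms, negation, conjunction, and the (diagonal) box. -/
inductive Formula : Type
  | atom : ℕ → Formula
  | neg : Formula → Formula
  | and : Formula → Formula → Formula
  | box : Formula → Formula

namespace Formula

def imp (φ ψ : Formula) : Formula := neg (and φ (neg ψ))
def or (φ ψ : Formula) : Formula := neg (and (neg φ) (neg ψ))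
def dia (φ : Formula) : Formula := neg (box (neg φ))
def bot : Formula := and (atom 0) (neg (atom 0))

/-- The set of propositional letters occurring in a formula. -/
def letters : Formula → Set ℕ
  | atom p => {p}
  | neg φ => letters φ
  | and φ ψ => letters φ ∪ letters ψ
  | box φ => letters φ

end Formula

/-- Conjunction of a list of formulas. -/
def conjList : List Formula → Formula
  | [] => Formula.neg Formula.bot
  | [φ] => φ
  | φ :: ψ :: rest => Formula.and φ (conjList (ψ :: rest))

/-- Disjunction of a list of formulas. -/
def disjList : List Formula → Formula
  | [] => Formula.bot
  | [φ] => φ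
  | φ :: ψ :: rest => Formula.or φ (disjList (ψ :: rest))

/-- ⋁_{0 ≤ i < j ≤ n} (φ_i ∧ φ_j) -/
def pairDisj (n : ℕ) (φ : Fin (n+1) → Formula) : Formula :=
  disjList (((List.finRange (n+1)).product (List.finRange (n+1))).filterMap
    (fun p => if p.1 < p.2 then some (Formula.and (φ p.1) (φ p.2)) else none))

/-- The axiom (scheme) K_n : □φ₀ ∧ ⋯ ∧ □φ_n → □⋁_{0 ≤ i < j ≤ n} (φ_i ∧ φ_j). -/
def KnAxiom (n : ℕ) (φ : Fin (n+1) → Formula) : Formula :=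
  Formula.imp (conjList ((List.finRange (n+1)).map (fun i => Formula.box (φ i))))
    (Formula.box (pairDisj n φ))

/-- A propositional tautology (including all substitution instances): a formula true under
every valuation of formulas respecting ¬ and ∧. -/
def Tautology (φ : Formula) : Prop :=
  ∀ v : Formula → Prop,
    (∀ ψ, v (Formula.neg ψ) ↔ ¬ v ψ) →
    (∀ ψ χ, v (Formula.and ψ χ) ↔ v ψ ∧ v χ) →
    v φ

/-- The proof system 𝕂_n: propositional tautologies, K_n, modus ponens, necessitation, RM. -/
inductive KProof (n : ℕ) : Formula → Prop
  | taut {φ} : Tautology φ → KProof n φ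
  | kn (φ : Fin (n+1) → Formula) : KProof n (KnAxiom n φ)
  | mp {φ ψ} : KProof n (Formula.imp φ ψ) → KProof n φ → KProof n ψ
  | nec {φ} : KProof n φ → KProof n (Formula.box φ)
  | rm {φ ψ} : KProof n (Formula.imp φ ψ) →
      KProof n (Formula.imp (Formula.box φ) (Formula.box ψ))

/-- An n-model: a nonempty set of worlds, an (n+1)-ary relation, a valuation. -/
structure NModel (n : ℕ) where
  World : Type
  nonempty : Nonempty World
  R : World → (Fin n → World) → Prop
  V : World → ℕ → Prop

/-- Diagonal semantics. -/
def Sat {n : ℕ} (M : NModel n) : M.World → Formula → Prop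
  | w, .atom p => M.V w p
  | w, .neg φ => ¬ Sat M w φ
  | w, .and φ ψ => Sat M w φ ∧ Sat M w ψ
  | w, .box φ => ∀ v : Fin n → M.World, M.R w v → ∃ i, Sat M (v i) φ

/-- wa^n-bisimulation between two n-models. -/
def IsBisim {n : ℕ} (M M' : NModel n) (Z : M.World → M'.World → Prop) : Prop :=
  (∃ w w', Z w w') ∧
  (∀ w w', Z w w' → ∀ p, M.V w p ↔ M'.V w' p) ∧
  (∀ w w' (v : Fin n → M.World), Z w w' → M.R w v →
    ∃ v' : Fin n → M'.World, M'.R w' v' ∧ ∀ j, ∃ i, Z (v i) (v' j)) ∧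
  (∀ w w' (v' : Fin n → M'.World), Z w w' → M'.R w' v' →
    ∃ v : Fin n → M.World, M.R w v ∧ ∀ i, ∃ j, Z (v i) (v' j))

/-- wa^n-bisimilarity of pointed n-models. -/
def Bisimilar {n : ℕ} (M M' : NModel n) (w : M.World) (w' : M'.World) : Prop :=
  ∃ Z, IsBisim M M' Z ∧ Z w w'

/-- Image-finiteness: each world has finitely many successor n-tuples. -/
def ImageFinite {n : ℕ} (M : NModel n) : Prop :=
  ∀ w : M.World, {v : Fin n → M.World | M.R w v}.Finite

/-- First-order correspondence language L¹_n: formulas with free variables among Fin k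
(de Bruijn style, `all` binds the last variable). -/
inductive FO (n : ℕ) : ℕ → Type
  | pred {k} : ℕ → Fin k → FO n k
  | rel {k} : (Fin (n+1) → Fin k) → FO n k
  | eq {k} : Fin k → Fin k → FO n k
  | fal {k} : FO n k
  | not {k} : FO n k → FO n k
  | and {k} : FO n k → FO n k → FO n k
  | or {k} : FO n k → FO n k → FO n k
  | imp {k} : FO n k → FO n k → FO n k
  | all {k} : FO n (k+1) → FO n k

/-- Realization of first-order formulas in an n-model (seen as an L¹_n-structure). -/
def FO.Realize {n : ℕ} (M : NModel n) : ∀ {k}, FO n k → (Fin k → M.World) → Prop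
  | _, .pred p x, a => M.V (a x) p
  | _, .rel ts, a => M.R (a (ts 0)) (fun i => a (ts i.succ))
  | _, .eq x y, a => a x = a y
  | _, .fal, _ => False
  | _, .not φ, a => ¬ FO.Realize M φ a
  | _, .and φ ψ, a => FO.Realize M φ a ∧ FO.Realize M ψ a
  | _, .or φ ψ, a => FO.Realize M φ a ∨ FO.Realize M ψ a
  | _, .imp φ ψ, a => FO.Realize M φ a → FO.Realize M ψ a
  | _, .all φ, a => ∀ x, FO.Realize M φ (Fin.snoc a x)

/-- Quantifier rank. -/
def FO.qr {n : ℕ} : ∀ {k}, FO n k → ℕ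
  | _, .pred _ _ => 0
  | _, .rel _ => 0
  | _, .eq _ _ => 0
  | _, .fal => 0
  | _, .not φ => φ.qr
  | _, .and φ ψ => max φ.qr ψ.qr
  | _, .or φ ψ => max φ.qr ψ.qr
  | _, .imp φ ψ => max φ.qr ψ.qr
  | _, .all φ => φ.qr + 1

/-- Renaming of free variables. -/
def FO.rename {n : ℕ} : ∀ {k k'}, (Fin k → Fin k') → FO n k → FO n k'
  | _, _, f, .pred p x => .pred p (f x)
  | _, _, f, .rel ts => .rel (fun i => f (ts i))
  | _, _, f, .eq x y => .eq (f x) (f y)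
  | _, _, _, .fal => .fal
  | _, _, f, .not φ => .not (φ.rename f)
  | _, _, f, .and φ ψ => .and (φ.rename f) (ψ.rename f)
  | _, _, f, .or φ ψ => .or (φ.rename f) (ψ.rename f)
  | _, _, f, .imp φ ψ => .imp (φ.rename f) (ψ.rename f)
  | _, _, f, .all φ =>
      .all (φ.rename (fun j => Fin.lastCases (Fin.last _) (fun a => (f a).castSucc) j))

/-- A block of m universal quantifiers (binding the last m variables). -/
def FO.alls {n k : ℕ} : ∀ (m : ℕ), FO n (k + m) → FO n k
  | 0, φ => φ
  | m+1, φ => FO.alls m φ.all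

/-- Disjunction of a list of first-order formulas. -/
def FO.disjList {n k : ℕ} : List (FO n k) → FO n k
  | [] => .fal
  | [φ] => φ
  | φ :: ψ :: rest => .or φ (FO.disjList (ψ :: rest))

/-- The standard translation ST_x (with x the unique free variable). -/
def ST (n : ℕ) : Formula → FO n 1
  | .atom p => .pred p 0
  | .neg φ => .not (ST n φ)
  | .and φ ψ => .and (ST n φ) (ST n ψ)
  | .box φ =>
      let ψ := ST n φ
      FO.alls n (FO.imp
        (.rel (Fin.cases (Fin.castAdd n (0 : Fin 1)) (fun i => Fin.natAdd 1 i)))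
        (FO.disjList ((List.finRange n).map
          (fun i => ψ.rename (fun _ => Fin.natAdd 1 i)))))

/-- α(x) (one free variable) is invariant under wa^n-bisimulation. -/
def BisimInvariant (n : ℕ) (α : FO n 1) : Prop :=
  ∀ (M N : NModel n) (Z : M.World → N.World → Prop) (w : M.World) (v : N.World),
    IsBisim M N Z → Z w v →
    (FO.Realize M α (fun _ => w) ↔ FO.Realize N α (fun _ => v))

/-- α(x) is invariant under wa^n-bisimulation between finite n-models. -/
def BisimInvariantFin (n : ℕ) (α : FO n 1) : Prop :=
  ∀ (M N : NModel n) (Z : M.World → N.World → Prop) (w : M.World) (v : N.World),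
    Finite M.World → Finite N.World → IsBisim M N Z → Z w v →
    (FO.Realize M α (fun _ => w) ↔ FO.Realize N α (fun _ => v))

/-- Admissible sequences for the unraveling of M around w. The first entry is
((w,…,w), 1) (index 0 in 0-based counting) and consecutive entries are related by R. -/
def GoodSeq {n : ℕ} [NeZero n] (M : NModel n) (w : M.World)
    (s : List ((Fin n → M.World) × Fin n)) : Prop :=
  (∃ rest, s = ((fun _ => w), (0 : Fin n)) :: rest) ∧
  List.Chain' (fun a b => M.R (a.1 a.2) b.1) s

/-- The world of M corresponding to a sequence: v⃗_m[i_m] (and w for the empty list). -/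
def rmap {n : ℕ} (M : NModel n) (w : M.World)
    (s : List ((Fin n → M.World) × Fin n)) : M.World :=
  match s.getLast? with
  | some a => a.1 a.2
  | none => w

/-- The unraveling M_w of M around w. -/
def Unravel {n : ℕ} [NeZero n] (M : NModel n) (w : M.World) : NModel n where
  World := { s : List ((Fin n → M.World) × Fin n) // GoodSeq M w s }
  nonempty := ⟨⟨[((fun _ => w), 0)], ⟨⟨[], rfl⟩, List.isChain_singleton _⟩⟩⟩
  R := fun s₀ t =>
    M.R (rmap M w s₀.val) (fun i => rmap M w (t i).val) ∧
    ∀ i, ∃ a, (t i).val = s₀.val ++ [a]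
  V := fun s p => M.V (rmap M w s.val) p

/-- The root ⟨((w,…,w),1)⟩ of the unraveling. -/
def unravelRoot {n : ℕ} [NeZero n] (M : NModel n) (w : M.World) :
    (Unravel M w).World :=
  ⟨[((fun _ => w), 0)], ⟨⟨[], rfl⟩, List.isChain_singleton _⟩⟩

/-- The bounded unraveling M_w|_l : the submodel of M_w of worlds of level at most l. -/
def UnravelB {n : ℕ} [NeZero n] (M : NModel n) (w : M.World) (l : ℕ) : NModel n where
  World := { s : List ((Fin n → M.World) × Fin n) // GoodSeq M w s ∧ s.length ≤ l + 1 }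
  nonempty := ⟨⟨[((fun _ => w), 0)], ⟨⟨⟨[], rfl⟩, List.isChain_singleton _⟩, by simp⟩⟩⟩
  R := fun s₀ t =>
    M.R (rmap M w s₀.val) (fun i => rmap M w (t i).val) ∧
    ∀ i, ∃ a, (t i).val = s₀.val ++ [a]
  V := fun s p => M.V (rmap M w s.val) p

/-- The root of the bounded unraveling. -/
def unravelBRoot {n : ℕ} [NeZero n] (M : NModel n) (w : M.World) (l : ℕ) :
    (UnravelB M w l).World :=
  ⟨[((fun _ => w), 0)], ⟨⟨⟨[], rfl⟩, List.isChain_singleton _⟩, by simp⟩⟩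

/-- R^c x y : y is a member of some successor tuple of x. -/
def Rc {n : ℕ} (M : NModel n) (x y : M.World) : Prop :=
  ∃ v : Fin n → M.World, M.R x v ∧ ∃ i, y = v i

/-- The undirected edge relation induced by R^c. -/
def Edge {n : ℕ} (M : NModel n) (x y : M.World) : Prop := Rc M x y ∨ Rc M y x

/-- There is an undirected R^c-path of length m from x to y. -/
def HasPath {n : ℕ} (M : NModel n) (x y : M.World) (m : ℕ) : Prop :=
  ∃ f : ℕ → M.World, f 0 = x ∧ f m = y ∧ ∀ i < m, Edge M (f i) (f (i+1))

/-- The distance between worlds, in ℕ ∪ {ω} (ω = ⊤ if there is no path). -/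
noncomputable def dist {n : ℕ} (M : NModel n) (x y : M.World) : ℕ∞ :=
  sInf {c : ℕ∞ | ∃ m : ℕ, c = (m : ℕ∞) ∧ HasPath M x y m}

/-- One literal among the letters r₁,…,r_m, i.e. the atoms 2,…,m+1. -/
def IsLit (m : ℕ) (φ : Formula) : Prop :=
  ∃ j, j < m ∧ (φ = Formula.atom (j+2) ∨ φ = Formula.neg (Formula.atom (j+2)))

/-- A conjunction of literals over the letters r₁,…,r_m. -/
inductive IsConjLits (m : ℕ) : Formula → Prop
  | lit {φ} : IsLit m φ → IsConjLits m φ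
  | conj {φ ψ} : IsConjLits m φ → IsConjLits m ψ → IsConjLits m (Formula.and φ ψ)

/-- The Craig Interpolation Property for 𝕂_n. -/
def HasCIP (n : ℕ) : Prop :=
  ∀ φ ψ : Formula, KProof n (φ.imp ψ) →
    ∃ γ : Formula, γ.letters ⊆ φ.letters ∩ ψ.letters ∧
      KProof n (φ.imp γ) ∧ KProof n (γ.imp ψ)


/-! ### Basic semantic lemmas -/

open Classical in
theorem sat_imp {n : ℕ} (M : NModel n) (w : M.World) (φ ψ : Formula) :
    Sat M w (φ.imp ψ) ↔ (Sat M w φ → Sat M w ψ) := by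
  simp [Formula.imp, Sat]

theorem sat_or {n : ℕ} (M : NModel n) (w : M.World) (φ ψ : Formula) :
    Sat M w (φ.or ψ) ↔ (Sat M w φ ∨ Sat M w ψ) := by
  simp [Formula.or, Sat]; tauto

theorem sat_dia {n : ℕ} (M : NModel n) (w : M.World) (φ : Formula) :
    Sat M w (φ.dia) ↔ ∃ v : Fin n → M.World, M.R w v ∧ ∀ i, Sat M (v i) φ := by
  simp [Formula.dia, Sat]

theorem sat_conjList {n : ℕ} (M : NModel n) (w : M.World) (l : List Formula) :
    Sat M w (conjList l) ↔ ∀ φ ∈ l, Sat M w φ := by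
  induction l with
  | nil => simp [conjList, Sat, Formula.bot]
  | cons φ rest ih =>
    cases rest with
    | nil => simp [conjList]
    | cons ψ t =>
      simp only [conjList, Sat] at *
      rw [ih]; simp

theorem sat_disjList {n : ℕ} (M : NModel n) (w : M.World) (l : List Formula) :
    Sat M w (disjList l) ↔ ∃ φ ∈ l, Sat M w φ := by
  induction l with
  | nil => simp [disjList, Sat, Formula.bot]
  | cons φ rest ih =>
    cases rest with
    | nil => simp [disjList]
    | cons ψ t =>
      rw [disjList, sat_or, ih]; simp

/-! ### Countability of formulas -/

def fenc : Formula → ℕ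
  | .atom p => Nat.pair 0 p
  | .neg φ => Nat.pair 1 (fenc φ)
  | .and φ ψ => Nat.pair 2 (Nat.pair (fenc φ) (fenc ψ))
  | .box φ => Nat.pair 3 (fenc φ)

theorem fenc_inj : Function.Injective fenc := by
  intro φ
  induction φ with
  | atom p => intro ψ h; cases ψ <;> simp [fenc, Nat.pair_eq_pair] at h; simp [h]
  | neg φ ih => intro ψ h; cases ψ <;> simp [fenc, Nat.pair_eq_pair] at h; simp [ih h]
  | and φ₁ φ₂ ih1 ih2 =>
    intro ψ h; cases ψ <;> simp [fenc, Nat.pair_eq_pair] at h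
    simp [ih1 h.1, ih2 h.2]
  | box φ ih => intro ψ h; cases ψ <;> simp [fenc, Nat.pair_eq_pair] at h; simp [ih h]

instance : Countable Formula := ⟨fenc, fenc_inj⟩

instance : Nonempty Formula := ⟨Formula.bot⟩

theorem exists_enum : ∃ e : ℕ → Formula, Function.Surjective e :=
  exists_surjective_nat Formula

/-! ### FO lemmas and ST correctness -/

theorem realize_imp {n k : ℕ} (M : NModel n) (φ ψ : FO n k) (a : Fin k → M.World) :
    FO.Realize M (FO.imp φ ψ) a ↔ (FO.Realize M φ a → FO.Realize M ψ a) := Iff.rfl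

theorem realize_rename {n : ℕ} (M : NModel n) :
    ∀ {k k'} (φ : FO n k) (f : Fin k → Fin k') (a : Fin k' → M.World),
    FO.Realize M (φ.rename f) a ↔ FO.Realize M φ (a ∘ f) := by
  intro k k' φ
  induction φ generalizing k' with
  | pred p x => exact fun f a => Iff.rfl
  | rel ts => exact fun f a => Iff.rfl
  | eq x y => exact fun f a => Iff.rfl
  | fal => exact fun f a => Iff.rfl
  | not φ ih => exact fun f a => not_congr (ih f a)
  | and φ ψ ih1 ih2 => exact fun f a => and_congr (ih1 f a) (ih2 f a)
  | or φ ψ ih1 ih2 => exact fun f a => or_congr (ih1 f a) (ih2 f a)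
  | imp φ ψ ih1 ih2 => exact fun f a => imp_congr (ih1 f a) (ih2 f a)
  | all φ ih =>
    intro f a
    simp only [FO.rename, FO.Realize]
    have key : ∀ x : M.World,
        (Fin.snoc a x) ∘ (fun j => Fin.lastCases (Fin.last _)
          (fun b => (f b).castSucc) j) = Fin.snoc (a ∘ f) x := by
      intro x; funext j
      refine Fin.lastCases ?_ ?_ j
      · simp
      · intro b; simp
    constructor
    · intro h x
      have := (ih _ (Fin.snoc a x)).mp (h x)
      rwa [key] at this
    · intro h x
      refine (ih _ (Fin.snoc a x)).mpr ?_
      rw [key]; exact h x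

theorem realize_alls {n k : ℕ} (M : NModel n) :
    ∀ (m : ℕ) (φ : FO n (k + m)) (a : Fin k → M.World),
    FO.Realize M (FO.alls m φ) a ↔
      ∀ g : Fin m → M.World, FO.Realize M φ (Fin.append a g) := by
  intro m
  induction m with
  | zero =>
    intro φ a
    constructor
    · intro h g
      have : g = Fin.elim0 := funext fun i => i.elim0
      rw [this, Fin.append_elim0]; exact h
    · intro h
      have := h Fin.elim0
      rwa [Fin.append_elim0] at this
  | succ m ih =>
    intro φ a
    rw [show FO.alls (m+1) φ = FO.alls m (FO.all φ) from rfl, ih]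
    constructor
    · intro h g
      have := h (Fin.init g) (g (Fin.last m))
      rwa [← Fin.append_snoc, Fin.snoc_init_self] at this
    · intro h g x
      have := h (Fin.snoc g x)
      rwa [Fin.append_snoc] at this

theorem realize_fo_disjList {n k : ℕ} (M : NModel n) (l : List (FO n k))
    (a : Fin k → M.World) :
    FO.Realize M (FO.disjList l) a ↔ ∃ φ ∈ l, FO.Realize M φ a := by
  induction l with
  | nil => simp [FO.disjList, FO.Realize]
  | cons φ rest ih =>
    cases rest with
    | nil => simp [FO.disjList]
    | cons ψ t =>
      rw [show FO.disjList (φ :: ψ :: t) = FO.or φ (FO.disjList (ψ :: t)) from rfl]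
      rw [show FO.Realize M (FO.or φ (FO.disjList (ψ :: t))) a ↔ _ ∨ _ from Iff.rfl, ih]
      simp

theorem ST_correct {n : ℕ} (φ : Formula) (M : NModel n) (w : M.World) :
    FO.Realize M (ST n φ) (fun _ => w) ↔ Sat M w φ := by
  induction φ generalizing w with
  | atom p => exact Iff.rfl
  | neg φ ih => exact not_congr (ih w)
  | and φ ψ ih1 ih2 => exact and_congr (ih1 w) (ih2 w)
  | box φ ih =>
    rw [show ST n (Formula.box φ) = FO.alls n (FO.imp
        (.rel (Fin.cases (Fin.castAdd n (0 : Fin 1)) (fun i => Fin.natAdd 1 i)))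
        (FO.disjList ((List.finRange n).map
          (fun i => (ST n φ).rename (fun _ => Fin.natAdd 1 i))))) from rfl]
    rw [realize_alls]
    show (∀ g : Fin n → M.World, _) ↔ _
    apply forall_congr'
    intro g
    have hrel : FO.Realize M (FO.rel (n := n)
        (Fin.cases (Fin.castAdd n (0 : Fin 1)) (fun i => Fin.natAdd 1 i)))
        (Fin.append (fun _ => w) g) ↔ M.R w g := by
      show M.R (Fin.append (fun _ => w) g (Fin.castAdd n (0 : Fin 1)))
          (fun i => Fin.append (fun _ => w) g
            (Fin.cases (Fin.castAdd n (0 : Fin 1)) (fun i => Fin.natAdd 1 i) i.succ)) ↔ _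
      rw [Fin.append_left]
      have : (fun i : Fin n => Fin.append (fun _ : Fin 1 => w) g
          (Fin.cases (Fin.castAdd n (0 : Fin 1)) (fun i => Fin.natAdd 1 i) i.succ)) = g := by
        funext i
        rw [Fin.cases_succ, Fin.append_right]
      rw [this]
    rw [realize_imp, hrel, realize_fo_disjList]
    apply imp_congr Iff.rfl
    constructor
    · rintro ⟨ψ, hmem, hψ⟩
      simp only [List.mem_map, List.mem_finRange, true_and] at hmem
      obtain ⟨i, rfl⟩ := hmem
      refine ⟨i, ?_⟩
      rw [realize_rename] at hψ
      have : (Fin.append (fun _ : Fin 1 => w) g) ∘ (fun _ : Fin 1 => Fin.natAdd 1 i)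
          = (fun _ => g i) := by
        funext j; simp [Function.comp, Fin.append_right]
      rw [this] at hψ
      exact (ih (g i)).mp hψ
    · rintro ⟨i, hi⟩
      refine ⟨(ST n φ).rename (fun _ => Fin.natAdd 1 i), by simp, ?_⟩
      rw [realize_rename]
      have : (Fin.append (fun _ : Fin 1 => w) g) ∘ (fun _ : Fin 1 => Fin.natAdd 1 i)
          = (fun _ => g i) := by
        funext j; simp [Function.comp, Fin.append_right]
      rw [this]
      exact (ih (g i)).mpr hi

/-! ### Invariance of modal satisfaction under bisimulation -/

theorem sat_invariant {n : ℕ} {M N : NModel n} {Z : M.World → N.World → Prop}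
    (hZ : IsBisim M N Z) (φ : Formula) :
    ∀ {w v}, Z w v → (Sat M w φ ↔ Sat N v φ) := by
  obtain ⟨-, hV, hforth, hback⟩ := hZ
  induction φ with
  | atom p => intro w v h; exact hV w v h p
  | neg φ ih => intro w v h; exact not_congr (ih h)
  | and φ ψ ih1 ih2 => intro w v h; exact and_congr (ih1 h) (ih2 h)
  | box φ ih =>
    intro w v h
    constructor
    · intro hbox t ht
      obtain ⟨s, hs, hrel⟩ := hback w v t h ht
      obtain ⟨i, hi⟩ := hbox s hs
      obtain ⟨j, hj⟩ := hrel i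
      exact ⟨j, (ih hj).mp hi⟩
    · intro hbox s hs
      obtain ⟨t, ht, hrel⟩ := hforth w v s h hs
      obtain ⟨j, hj⟩ := hbox t ht
      obtain ⟨i, hi⟩ := hrel j
      exact ⟨i, (ih hi).mpr hj⟩

/-! ### Ultraproducts and Łoś's theorem -/

section Ultra

variable {n : ℕ} (U : Ultrafilter ℕ) (Ms : ℕ → NModel n)

def uSetoid : Setoid (∀ i, (Ms i).World) where
  r f g := ∀ᶠ i in (U : Filter ℕ), f i = g i
  iseqv := ⟨fun f => Filter.Eventually.of_forall (fun _ => rfl),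
    fun h => h.mono (fun i hi => hi.symm),
    fun h1 h2 => (h1.and h2).mono (fun i hi => hi.1.trans hi.2)⟩

def UProd : NModel n where
  World := Quotient (uSetoid U Ms)
  nonempty := ⟨Quotient.mk _ (fun i => Classical.choice (Ms i).nonempty)⟩
  R x v := ∀ᶠ i in (U : Filter ℕ),
    (Ms i).R (x.out i) (fun j => ((v j).out) i)
  V x p := ∀ᶠ i in (U : Filter ℕ), (Ms i).V (x.out i) p

def umk (f : ∀ i, (Ms i).World) : (UProd U Ms).World :=
  Quotient.mk (uSetoid U Ms) f

theorem umk_out (f : ∀ i, (Ms i).World) :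
    ∀ᶠ i in (U : Filter ℕ), (umk U Ms f).out i = f i :=
  Quotient.mk_out (s := uSetoid U Ms) f

theorem umk_surjective : Function.Surjective (umk U Ms) := by
  intro x
  exact ⟨x.out, Quotient.out_eq x⟩

theorem umk_eq_iff (f g : ∀ i, (Ms i).World) :
    umk U Ms f = umk U Ms g ↔ ∀ᶠ i in (U : Filter ℕ), f i = g i :=
  Quotient.eq (r := uSetoid U Ms)

theorem uprod_v_mk (f : ∀ i, (Ms i).World) (p : ℕ) :
    (UProd U Ms).V (umk U Ms f) p ↔ ∀ᶠ i in (U : Filter ℕ), (Ms i).V (f i) p := by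
  apply Filter.eventually_congr
  exact (umk_out U Ms f).mono (fun i hi => by rw [hi])

theorem uprod_r_mk (f : ∀ i, (Ms i).World) (g : Fin n → ∀ i, (Ms i).World) :
    (UProd U Ms).R (umk U Ms f) (fun j => umk U Ms (g j)) ↔
      ∀ᶠ i in (U : Filter ℕ), (Ms i).R (f i) (fun j => g j i) := by
  apply Filter.eventually_congr
  have hall : ∀ᶠ i in (U : Filter ℕ), ∀ j, (umk U Ms (g j)).out i = g j i :=
    Filter.eventually_all.2 (fun j => umk_out U Ms (g j))
  refine ((umk_out U Ms f).and hall).mono (fun i hi => ?_)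
  rw [hi.1, show (fun j => ((umk U Ms (g j)).out) i) = fun j => g j i from
    funext (fun j => hi.2 j)]


theorem not_eventually_false (U : Ultrafilter ℕ) :
    ¬ ∀ᶠ _i in (U : Filter ℕ), False := by
  intro h
  have : (U : Filter ℕ) = ⊥ := by simpa using h
  exact (Ultrafilter.neBot U).ne this

/-- Łoś's theorem for modal formulas. -/
theorem sat_uprod (φ : Formula) : ∀ f : ∀ i, (Ms i).World,
    Sat (UProd U Ms) (umk U Ms f) φ ↔
      ∀ᶠ i in (U : Filter ℕ), Sat (Ms i) (f i) φ := by
  induction φ with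
  | atom p => intro f; exact uprod_v_mk U Ms f p
  | neg φ ih =>
    intro f
    rw [show Sat (UProd U Ms) (umk U Ms f) φ.neg ↔ ¬ Sat (UProd U Ms) (umk U Ms f) φ
      from Iff.rfl, ih f, ← Ultrafilter.eventually_not]
    exact Iff.rfl
  | and φ ψ ih1 ih2 =>
    intro f
    rw [show Sat (UProd U Ms) (umk U Ms f) (φ.and ψ) ↔ _ ∧ _ from Iff.rfl,
      ih1 f, ih2 f, ← Filter.eventually_and]
    exact Iff.rfl
  | box φ ih =>
    intro f
    constructor
    · intro hbox
      by_contra hcon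
      rw [← Ultrafilter.eventually_not] at hcon
      have hex : ∀ᶠ i in (U : Filter ℕ), ∃ v : Fin n → (Ms i).World,
          (Ms i).R (f i) v ∧ ∀ j, ¬ Sat (Ms i) (v j) φ := by
        refine hcon.mono (fun i hi => ?_)
        simp only [Sat, not_forall] at hi
        obtain ⟨v, hv1, hv2⟩ := hi
        exact ⟨v, hv1, by push_neg at hv2; exact hv2⟩
      classical
      choose t ht using fun i (hi : ∃ v : Fin n → (Ms i).World,
          (Ms i).R (f i) v ∧ ∀ j, ¬ Sat (Ms i) (v j) φ) => hi
      set g : Fin n → ∀ i, (Ms i).World := fun j i =>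
        if h : ∃ v : Fin n → (Ms i).World,
            (Ms i).R (f i) v ∧ ∀ j, ¬ Sat (Ms i) (v j) φ
        then t i h j else Classical.choice (Ms i).nonempty with hg
      have hR : (UProd U Ms).R (umk U Ms f) (fun j => umk U Ms (g j)) := by
        rw [uprod_r_mk]
        refine hex.mono (fun i hi => ?_)
        simp only [hg, dif_pos hi]
        exact (ht i hi).1
      obtain ⟨j, hj⟩ := hbox _ hR
      rw [ih (g j)] at hj
      have : ∀ᶠ i in (U : Filter ℕ), False := by
        refine (hj.and hex).mono (fun i hi => ?_)
        have := hi.2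
        have h2 : ¬ Sat (Ms i) (g j i) φ := by
          simp only [hg, dif_pos hi.2]
          exact (ht i hi.2).2 j
        exact h2 hi.1
      exact not_eventually_false U this
    · intro hbox v hv
      obtain ⟨g, hg⟩ : ∃ g : Fin n → ∀ i, (Ms i).World, ∀ j, umk U Ms (g j) = v j := by
        refine ⟨fun j => (v j).out, fun j => Quotient.out_eq _⟩
      rw [show v = fun j => umk U Ms (g j) from funext (fun j => (hg j).symm),
        uprod_r_mk] at hv
      by_contra hcon
      push_neg at hcon
      have hnots : ∀ j, ∀ᶠ i in (U : Filter ℕ), ¬ Sat (Ms i) (g j i) φ := by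
        intro j
        have := hcon j
        rw [show v j = umk U Ms (g j) from (hg j).symm, ih (g j)] at this
        rwa [Ultrafilter.eventually_not]
      have hallnot : ∀ᶠ i in (U : Filter ℕ), ∀ j, ¬ Sat (Ms i) (g j i) φ :=
        Filter.eventually_all.2 hnots
      have : ∀ᶠ i in (U : Filter ℕ), False := by
        refine ((hbox.and hv).and hallnot).mono (fun i hi => ?_)
        obtain ⟨⟨h1, h2⟩, h3⟩ := hi
        obtain ⟨j, hj⟩ := h1 _ h2
        exact h3 j hj
      exact not_eventually_false U this

/-- Łoś's theorem for first-order formulas. -/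
theorem realize_uprod : ∀ {k} (φ : FO n k) (g : Fin k → ∀ i, (Ms i).World),
    FO.Realize (UProd U Ms) φ (fun x => umk U Ms (g x)) ↔
      ∀ᶠ i in (U : Filter ℕ), FO.Realize (Ms i) φ (fun x => g x i) := by
  intro k φ
  induction φ with
  | pred p x => intro g; exact uprod_v_mk U Ms (g x) p
  | rel ts => intro g; exact uprod_r_mk U Ms (g (ts 0)) (fun j => g (ts j.succ))
  | eq x y =>
    intro g
    rw [show FO.Realize (UProd U Ms) (FO.eq x y) (fun z => umk U Ms (g z)) ↔
      umk U Ms (g x) = umk U Ms (g y) from Iff.rfl, umk_eq_iff]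
    exact Iff.rfl
  | fal =>
    intro g
    exact ⟨False.elim, fun h => (not_eventually_false U (h.mono (fun i hi => hi))).elim⟩
  | not φ ih =>
    intro g
    rw [show FO.Realize (UProd U Ms) φ.not (fun z => umk U Ms (g z)) ↔
      ¬ FO.Realize (UProd U Ms) φ (fun z => umk U Ms (g z)) from Iff.rfl, ih g,
      ← Ultrafilter.eventually_not]
    exact Iff.rfl
  | and φ ψ ih1 ih2 =>
    intro g
    rw [show FO.Realize (UProd U Ms) (φ.and ψ) (fun z => umk U Ms (g z)) ↔ _ ∧ _
      from Iff.rfl, ih1 g, ih2 g, ← Filter.eventually_and]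
    exact Iff.rfl
  | or φ ψ ih1 ih2 =>
    intro g
    rw [show FO.Realize (UProd U Ms) (φ.or ψ) (fun z => umk U Ms (g z)) ↔ _ ∨ _
      from Iff.rfl, ih1 g, ih2 g, ← Ultrafilter.eventually_or]
    exact Iff.rfl
  | imp φ ψ ih1 ih2 =>
    intro g
    rw [show FO.Realize (UProd U Ms) (φ.imp ψ) (fun z => umk U Ms (g z)) ↔ (_ → _)
      from Iff.rfl, ih1 g, ih2 g, ← Ultrafilter.eventually_imp]
    exact Iff.rfl
  | all φ ih =>
    intro g
    constructor
    · intro h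
      by_contra hcon
      rw [← Ultrafilter.eventually_not] at hcon
      have hex : ∀ᶠ i in (U : Filter ℕ), ∃ b : (Ms i).World,
          ¬ FO.Realize (Ms i) φ (Fin.snoc (fun x => g x i) b) := by
        refine hcon.mono (fun i hi => ?_)
        simp only [FO.Realize, not_forall] at hi
        exact hi
      classical
      set h' : ∀ i, (Ms i).World := fun i =>
        if hb : ∃ b : (Ms i).World, ¬ FO.Realize (Ms i) φ (Fin.snoc (fun x => g x i) b)
        then hb.choose else Classical.choice (Ms i).nonempty with hh
      have := h (umk U Ms h')
      have heq : Fin.snoc (fun x => umk U Ms (g x)) (umk U Ms h') =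
          fun x => umk U Ms (Fin.snoc (α := fun _ => ∀ i, (Ms i).World) g h' x) := by
        funext x
        refine Fin.lastCases ?_ ?_ x
        · simp
        · intro x; simp
      rw [heq, ih (Fin.snoc (α := fun _ => ∀ i, (Ms i).World) g h')] at this
      have hbad : ∀ᶠ i in (U : Filter ℕ), False := by
        refine (this.and hex).mono (fun i hi => ?_)
        obtain ⟨h1, h2⟩ := hi
        have heq2 : (fun x => Fin.snoc (α := fun _ => ∀ i, (Ms i).World) g h' x i) =
            Fin.snoc (fun x => g x i) (h' i) := by
          funext x
          refine Fin.lastCases ?_ ?_ x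
          · simp
          · intro x; simp
        rw [heq2] at h1
        have : ¬ FO.Realize (Ms i) φ (Fin.snoc (fun x => g x i) (h' i)) := by
          simp only [hh, dif_pos h2]
          exact h2.choose_spec
        exact this h1
      exact not_eventually_false U hbad
    · intro h x
      obtain ⟨h', rfl⟩ := umk_surjective U Ms x
      have heq : Fin.snoc (fun x => umk U Ms (g x)) (umk U Ms h') =
          fun x => umk U Ms (Fin.snoc (α := fun _ => ∀ i, (Ms i).World) g h' x) := by
        funext x
        refine Fin.lastCases ?_ ?_ x
        · simp
        · intro x; simp
      rw [heq, ih (Fin.snoc (α := fun _ => ∀ i, (Ms i).World) g h')]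
      refine h.mono (fun i hi => ?_)
      have := hi (h' i)
      have heq2 : (fun x => Fin.snoc (α := fun _ => ∀ i, (Ms i).World) g h' x i) =
          Fin.snoc (fun x => g x i) (h' i) := by
        funext x
        refine Fin.lastCases ?_ ?_ x
        · simp
        · intro x; simp
      rwa [heq2]

end Ultra

/-! ### Ultrapowers over the hyperfilter; countable chain realization -/

noncomputable def hU : Ultrafilter ℕ := Filter.hyperfilter ℕ

theorem hU_ge (k : ℕ) : ∀ᶠ i in (hU : Filter ℕ), k ≤ i :=
  (Filter.eventually_ge_atTop k).filter_mono Nat.hyperfilter_le_atTop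

noncomputable def UPow {n : ℕ} (M : NModel n) : NModel n := UProd hU (fun _ => M)

noncomputable def diag {n : ℕ} (M : NModel n) (w : M.World) : (UPow M).World :=
  umk hU (fun _ => M) (fun _ => w)

theorem sat_diag {n : ℕ} (M : NModel n) (w : M.World) (φ : Formula) :
    Sat (UPow M) (diag M w) φ ↔ Sat M w φ := by
  exact (sat_uprod hU (fun _ => M) φ (fun _ => w)).trans Filter.eventually_const

theorem realize_diag {n : ℕ} (M : NModel n) (w : M.World) (α : FO n 1) :
    FO.Realize (UPow M) α (fun _ => diag M w) ↔ FO.Realize M α (fun _ => w) := by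
  exact (realize_uprod hU (fun _ => M) α (fun _ _ => w)).trans Filter.eventually_const

theorem sat_mono_of_chain {n : ℕ} (N : NModel n) (δ : ℕ → Formula)
    (hmono : ∀ k (x : N.World), Sat N x (δ (k+1)) → Sat N x (δ k)) :
    ∀ {k m}, k ≤ m → ∀ x : N.World, Sat N x (δ m) → Sat N x (δ k) := by
  intro k m hkm
  induction m with
  | zero => cases Nat.le_zero.mp hkm; exact fun x h => h
  | succ m ih =>
    intro x hx
    by_cases h : k = m + 1
    · cases h; exact hx
    · exact ih (Nat.lt_succ_iff.mp (lt_of_le_of_ne hkm h)) x (hmono m x hx)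

/-- Realization of countable decreasing chains of diamond requirements in the
hyperpower: the saturation property needed for Hennessy–Milner. -/
theorem chain_realize {n : ℕ} (N : NModel n) (f : ℕ → N.World) (δ : ℕ → Formula)
    (hmono : ∀ k (x : N.World), Sat N x (δ (k+1)) → Sat N x (δ k))
    (hdia : ∀ k, Sat (UPow N) (umk hU (fun _ => N) f) ((δ k).dia)) :
    ∃ v : Fin n → (UPow N).World, (UPow N).R (umk hU (fun _ => N) f) v ∧
      ∀ j k, Sat (UPow N) (v j) (δ k) := by
  classical
  have hA : ∀ k, ∀ᶠ i in (hU : Filter ℕ), Sat N (f i) ((δ k).dia) := by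
    intro k
    have := (sat_uprod hU (fun _ => N) ((δ k).dia) f).mp (hdia k)
    exact this
  have hAanti : ∀ {k m}, k ≤ m → ∀ i, Sat N (f i) ((δ m).dia) → Sat N (f i) ((δ k).dia) := by
    intro k m hkm i h
    rw [sat_dia] at h ⊢
    obtain ⟨v, hv1, hv2⟩ := h
    exact ⟨v, hv1, fun j => sat_mono_of_chain N δ hmono hkm _ (hv2 j)⟩
  set P : ℕ → ℕ → Prop := fun i k => Sat N (f i) ((δ k).dia) with hP
  set d : ℕ → ℕ := fun i => Nat.findGreatest (P i) i with hd
  have hdP : ∀ i, P i 0 → P i (d i) := by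
    intro i h0
    exact Nat.findGreatest_spec (Nat.zero_le i) h0
  have hdge : ∀ k i, k ≤ i → P i k → k ≤ d i := by
    intro k i hki hk
    exact Nat.le_findGreatest hki hk
  -- choose witness tuples
  set g : Fin n → ℕ → N.World := fun j i =>
    if h : P i (d i) then ((sat_dia N (f i) (δ (d i))).mp h).choose j
    else Classical.choice N.nonempty with hg
  have hgspec : ∀ i, P i (d i) → N.R (f i) (fun j => g j i) ∧
      ∀ j, Sat N (g j i) (δ (d i)) := by
    intro i h
    have hspec := ((sat_dia N (f i) (δ (d i))).mp h).choose_spec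
    constructor
    · have : (fun j => g j i) = ((sat_dia N (f i) (δ (d i))).mp h).choose := by
        funext j; simp only [hg, dif_pos h]
      rw [this]; exact hspec.1
    · intro j; simp only [hg, dif_pos h]; exact hspec.2 j
  refine ⟨fun j => umk hU (fun _ => N) (g j), ?_, ?_⟩
  · refine (uprod_r_mk hU (fun _ => N) f g).mpr ?_
    refine (hA 0).mono (fun i hi => ?_)
    exact (hgspec i (hdP i hi)).1
  · intro j k
    refine (sat_uprod hU (fun _ => N) (δ k) (g j)).mpr ?_
    refine ((hA k).and (hU_ge k)).mono (fun i hi => ?_)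
    have h0 : P i 0 := hAanti (Nat.zero_le k) i hi.1
    have hdk : k ≤ d i := hdge k i hi.2 hi.1
    exact sat_mono_of_chain N δ hmono hdk _ ((hgspec i (hdP i h0)).2 j)

/-! ### Characteristic formulas and Hennessy–Milner for hyperpowers -/

noncomputable def enum : ℕ → Formula := exists_enum.choose

theorem enum_surj : Function.Surjective enum := exists_enum.choose_spec

open Classical in
/-- Conjunction of the first `k` formulas or their negations, according to their
truth value at `a`. -/
noncomputable def chi {n : ℕ} (A : NModel n) (a : A.World) (k : ℕ) : Formula :=
  conjList ((List.range k).map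
    (fun m => if Sat A a (enum m) then enum m else (enum m).neg))

theorem sat_chi {n : ℕ} (A : NModel n) (a : A.World) (k : ℕ)
    (B : NModel n) (b : B.World) :
    Sat B b (chi A a k) ↔ ∀ m < k, (Sat B b (enum m) ↔ Sat A a (enum m)) := by
  classical
  rw [chi, sat_conjList]
  constructor
  · intro h m hm
    have hmem : (if Sat A a (enum m) then enum m else (enum m).neg) ∈
        (List.range k).map (fun m => if Sat A a (enum m) then enum m else (enum m).neg) :=
      List.mem_map.2 ⟨m, List.mem_range.2 hm, rfl⟩
    have := h _ hmem
    by_cases hs : Sat A a (enum m)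
    · rw [if_pos hs] at this; exact iff_of_true this hs
    · rw [if_neg hs] at this
      exact iff_of_false this hs
  · intro h φ hφ
    obtain ⟨m, hm, rfl⟩ := List.mem_map.1 hφ
    have := h m (List.mem_range.1 hm)
    by_cases hs : Sat A a (enum m)
    · rw [if_pos hs]; exact this.2 hs
    · rw [if_neg hs]
      exact fun hc => hs (this.1 hc)

theorem sat_chi_self {n : ℕ} (A : NModel n) (a : A.World) (k : ℕ) :
    Sat A a (chi A a k) :=
  (sat_chi A a k A a).2 (fun _ _ => Iff.rfl)

/-- Modal equivalence of pointed models. -/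
def MEquiv {n : ℕ} (A B : NModel n) (a : A.World) (b : B.World) : Prop :=
  ∀ φ, Sat A a φ ↔ Sat B b φ

theorem MEquiv.symm {n : ℕ} {A B : NModel n} {a : A.World} {b : B.World}
    (h : MEquiv A B a b) : MEquiv B A b a := fun φ => (h φ).symm

/-- The forth condition holds for modal equivalence between hyperpowers. -/
theorem meq_forth {n : ℕ} (M N : NModel n) (w : (UPow M).World) (w' : (UPow N).World)
    (hZ : MEquiv (UPow M) (UPow N) w w') (v : Fin n → (UPow M).World)
    (hR : (UPow M).R w v) :
    ∃ v' : Fin n → (UPow N).World, (UPow N).R w' v' ∧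
      ∀ j, ∃ i, MEquiv (UPow M) (UPow N) (v i) (v' j) := by
  classical
  set δ : ℕ → Formula := fun k =>
    disjList ((List.finRange n).map (fun i => chi (UPow M) (v i) k)) with hδ
  have sat_δ : ∀ (B : NModel n) (b : B.World) (k : ℕ),
      Sat B b (δ k) ↔ ∃ i : Fin n, Sat B b (chi (UPow M) (v i) k) := by
    intro B b k
    rw [hδ, sat_disjList]
    constructor
    · rintro ⟨φ, hφ, hs⟩
      obtain ⟨i, _, rfl⟩ := List.mem_map.1 hφ
      exact ⟨i, hs⟩
    · rintro ⟨i, hs⟩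
      exact ⟨_, List.mem_map.2 ⟨i, List.mem_finRange i, rfl⟩, hs⟩
  have hmono : ∀ k (x : N.World), Sat N x (δ (k+1)) → Sat N x (δ k) := by
    intro k x hx
    rw [sat_δ] at hx ⊢
    obtain ⟨i, hi⟩ := hx
    refine ⟨i, ?_⟩
    rw [sat_chi] at hi ⊢
    exact fun m hm => hi m (Nat.lt_succ_of_lt hm)
  have hdia : ∀ k, Sat (UPow N) w' ((δ k).dia) := by
    intro k
    refine (hZ ((δ k).dia)).1 ?_
    rw [sat_dia]
    exact ⟨v, hR, fun i => (sat_δ _ _ k).2 ⟨i, sat_chi_self _ _ k⟩⟩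
  obtain ⟨f', hf'⟩ := umk_surjective hU (fun _ => N) w'
  rw [← hf'] at hdia
  obtain ⟨v', hRv', hsat⟩ := chain_realize N f' δ hmono hdia
  rw [hf'] at hRv'
  refine ⟨v', hRv', ?_⟩
  intro j
  by_contra hcon
  push_neg at hcon
  have hdis : ∀ i : Fin n, ∃ m : ℕ,
      ¬ (Sat (UPow N) (v' j) (enum m) ↔ Sat (UPow M) (v i) (enum m)) := by
    intro i
    obtain ⟨φ, hφ⟩ := not_forall.1 (hcon i)
    obtain ⟨m, rfl⟩ := enum_surj φ
    exact ⟨m, fun hc => hφ hc.symm⟩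
  choose m hm using hdis
  set K : ℕ := (Finset.univ.sup m) + 1 with hK
  have hsK := hsat j K
  rw [sat_δ] at hsK
  obtain ⟨i, hi⟩ := hsK
  rw [sat_chi] at hi
  exact hm i (hi (m i) (Nat.lt_succ_of_le (Finset.le_sup (Finset.mem_univ i))))

/-- Modal equivalence between hyperpowers is a wa-bisimulation. -/
theorem meq_bisim {n : ℕ} (M N : NModel n) (x : (UPow M).World) (y : (UPow N).World)
    (hxy : MEquiv (UPow M) (UPow N) x y) :
    IsBisim (UPow M) (UPow N) (fun a b => MEquiv (UPow M) (UPow N) a b) := by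
  refine ⟨⟨x, y, hxy⟩, ?_, ?_, ?_⟩
  · intro w w' h p
    exact h (Formula.atom p)
  · intro w w' v h hv
    exact meq_forth M N w w' h v hv
  · intro w w' v' h hv'
    obtain ⟨v, hRv, hrel⟩ := meq_forth N M w' w h.symm v' hv'
    refine ⟨v, hRv, ?_⟩
    intro i
    obtain ⟨j, hj⟩ := hrel i
    exact ⟨j, hj.symm⟩

/-! ### The main argument -/

theorem sat_verum {n : ℕ} (M : NModel n) (w : M.World) : Sat M w Formula.bot.neg :=
  fun h => h.2 h.1

/-- The modal consequences of α. -/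
def Gamma {n : ℕ} (α : FO n 1) : Set Formula :=
  {φ | ∀ (M : NModel n) (w : M.World), FO.Realize M α (fun _ => w) → Sat M w φ}

open Classical in
/-- Conjunction of the consequences of α among the first k formulas. -/
noncomputable def gam {n : ℕ} (α : FO n 1) (k : ℕ) : Formula :=
  conjList ((List.range k).map
    (fun m => if enum m ∈ Gamma α then enum m else Formula.bot.neg))

theorem sat_gam {n : ℕ} (α : FO n 1) (k : ℕ) (M : NModel n) (w : M.World) :
    Sat M w (gam α k) ↔ ∀ m < k, enum m ∈ Gamma α → Sat M w (enum m) := by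
  classical
  rw [gam, sat_conjList]
  constructor
  · intro h m hm hmem
    have hin : (if enum m ∈ Gamma α then enum m else Formula.bot.neg) ∈
        (List.range k).map (fun m => if enum m ∈ Gamma α then enum m else Formula.bot.neg) :=
      List.mem_map.2 ⟨m, List.mem_range.2 hm, rfl⟩
    have := h _ hin
    rwa [if_pos hmem] at this
  · intro h φ hφ
    obtain ⟨m, hm, rfl⟩ := List.mem_map.1 hφ
    by_cases hmem : enum m ∈ Gamma α
    · rw [if_pos hmem]; exact h m (List.mem_range.1 hm) hmem
    · rw [if_neg hmem]; exact sat_verum M w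

/-- Every model of all modal consequences of a bisimulation-invariant α is a
model of α. -/
theorem gamma_entails {n : ℕ} (α : FO n 1) (hinv : BisimInvariant n α) :
    ∀ (N : NModel n) (v : N.World), (∀ φ ∈ Gamma α, Sat N v φ) →
      FO.Realize N α (fun _ => v) := by
  intro N v hv
  have hsat : ∀ k, ∃ (M : NModel n) (w : M.World),
      FO.Realize M α (fun _ => w) ∧ Sat M w (chi N v k) := by
    intro k
    by_contra hcon
    push_neg at hcon
    have hmem : (chi N v k).neg ∈ Gamma α := fun M w hw => hcon M w hw
    exact (hv _ hmem) (sat_chi_self N v k)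
  choose Ms ws hα hchi using hsat
  have hαstar : FO.Realize (UProd hU Ms) α (fun _ => umk hU Ms ws) := by
    refine (realize_uprod hU Ms α (fun _ => ws)).mpr ?_
    exact Filter.Eventually.of_forall (fun i => hα i)
  have hmeq : MEquiv (UProd hU Ms) N (umk hU Ms ws) v := by
    intro φ
    obtain ⟨m, rfl⟩ := enum_surj φ
    rw [sat_uprod hU Ms (enum m) ws]
    constructor
    · intro h
      by_contra hns
      have hbad : ∀ᶠ i in (hU : Filter ℕ), ¬ Sat (Ms i) (ws i) (enum m) := by
        refine (hU_ge (m+1)).mono (fun i hi => ?_)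
        have hiff := (sat_chi N v i (Ms i) (ws i)).1 (hchi i) m
          (lt_of_lt_of_le (Nat.lt_succ_self m) hi)
        exact fun hs => hns (hiff.1 hs)
      exact (not_eventually_false hU ((h.and hbad).mono (fun i hi => hi.2 hi.1))).elim
    · intro h
      refine (hU_ge (m+1)).mono (fun i hi => ?_)
      have hiff := (sat_chi N v i (Ms i) (ws i)).1 (hchi i) m
        (lt_of_lt_of_le (Nat.lt_succ_self m) hi)
      exact hiff.2 h
  have hmeq2 : MEquiv (UPow (UProd hU Ms)) (UPow N)
      (diag (UProd hU Ms) (umk hU Ms ws)) (diag N v) := by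
    intro φ
    rw [sat_diag, sat_diag]
    exact hmeq φ
  have hb := meq_bisim (UProd hU Ms) N _ _ hmeq2
  have hres := hinv (UPow (UProd hU Ms)) (UPow N) _
    (diag (UProd hU Ms) (umk hU Ms ws)) (diag N v) hb hmeq2
  rw [realize_diag, realize_diag] at hres
  exact hres.1 hαstar

/-- van Benthem-style characterization of WAML^n over all n-models. -/
theorem van_benthem_characterization (n : ℕ) (hn : 1 ≤ n) (α : FO n 1) :
    BisimInvariant n α ↔
    ∃ φ : Formula, ∀ (M : NModel n) (w : M.World),
      FO.Realize M α (fun _ => w) ↔ FO.Realize M (ST n φ) (fun _ => w) := by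
  constructor
  · intro hinv
    have hk : ∃ k, ∀ (M : NModel n) (w : M.World),
        Sat M w (gam α k) → FO.Realize M α (fun _ => w) := by
      by_contra hcon
      push_neg at hcon
      choose Ns vs hg hnα using hcon
      have h1 : ∀ φ ∈ Gamma α, Sat (UProd hU Ns) (umk hU Ns vs) φ := by
        intro φ hφ
        obtain ⟨m, rfl⟩ := enum_surj φ
        rw [sat_uprod hU Ns (enum m) vs]
        refine (hU_ge (m+1)).mono (fun i hi => ?_)
        exact (sat_gam α i (Ns i) (vs i)).1 (hg i) m
          (lt_of_lt_of_le (Nat.lt_succ_self m) hi) hφ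
      have h2 := gamma_entails α hinv (UProd hU Ns) (umk hU Ns vs) h1
      have h3 := (realize_uprod hU Ns α (fun _ => vs)).mp h2
      exact not_eventually_false hU (h3.mono (fun i hi => hnα i hi))
    obtain ⟨k, hk⟩ := hk
    refine ⟨gam α k, ?_⟩
    intro M w
    rw [ST_correct]
    constructor
    · intro h
      rw [sat_gam]
      intro m _ hmem
      exact hmem M w h
    · exact hk M w
  · rintro ⟨φ, hφ⟩ M N Z w v hbis hZ
    rw [hφ M w, hφ N v, ST_correct, ST_correct]
    exact sat_invariant hbis φ hZ

end WAML
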